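/- Let q be a prime power and G ≤ PGL₂(F_q) a non-cyclic subgroup of order at least 5. Then no monic irreducible polynomial f ∈ F_q[x] of degree at least 3 is G-invariant. -/

import Mathlib

open Polynomial

noncomputable section

namespace PGLAct

variable {F : Type} [Field F]

/-- The composition `A ∘ f = ∑ aᵢ (a x + c)^i (b x + d)^{k-i}` for `A = [[a,b],[c,d]]`. -/
def mcirc (A : Matrix (Fin 2) (Fin 2) F) (f : F[X]) : F[X] :=
  ∑ i ∈ Finset.range (f.natDegree + 1),
    C (f.coeff i) * (C (A 0 0) * X + C (A 1 0)) ^ i *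
      (C (A 0 1) * X + C (A 1 1)) ^ (f.natDegree - i)

/-- The composition `[A] ∘ f`: the monic normalization of `A ∘ f`. -/
def pcirc (A : Matrix (Fin 2) (Fin 2) F) (f : F[X]) : F[X] :=
  C (mcirc A f).leadingCoeff⁻¹ * mcirc A f

/-- The subgroup of scalar matrices in `GL₂(F)`. -/
def scalarSub (F : Type) [Field F] : Subgroup (GL (Fin 2) F) :=
  (Units.map ((Matrix.scalar (Fin 2)).toMonoidHom : F →* Matrix (Fin 2) (Fin 2) F)).range

instance scalarSub_normal (F : Type) [Field F] : (scalarSub F).Normal := by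
  constructor
  intro n hn g
  obtain ⟨u, hu⟩ := hn
  refine ⟨u, ?_⟩
  ext : 1
  have hcomm : Commute ((Matrix.scalar (Fin 2)) (u : F)) (g : Matrix (Fin 2) (Fin 2) F) :=
    Matrix.scalar_commute _ (fun r' => Commute.all _ r') _
  have hval : (n : Matrix (Fin 2) (Fin 2) F) = (Matrix.scalar (Fin 2)) (u : F) := by
    rw [← hu]; rfl
  calc ((Units.map ((Matrix.scalar (Fin 2)).toMonoidHom : F →* Matrix (Fin 2) (Fin 2) F)) u :
        GL (Fin 2) F).val
      = (Matrix.scalar (Fin 2)) (u : F) := rfl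
    _ = (g : Matrix (Fin 2) (Fin 2) F) * (Matrix.scalar (Fin 2)) (u : F)
        * ((g⁻¹ : GL (Fin 2) F) : Matrix (Fin 2) (Fin 2) F) := by
        rw [← hcomm.eq, mul_assoc, ← Units.val_mul, mul_inv_cancel]
        simp
    _ = ((g * n * g⁻¹ : GL (Fin 2) F) : Matrix (Fin 2) (Fin 2) F) := by
        simp [Units.val_mul, hval]

/-- `PGL₂(F)`, the projective general linear group. -/
def PGL2 (F : Type) [Field F] : Type := GL (Fin 2) F ⧸ scalarSub F

instance : Group (PGL2 F) := inferInstanceAs (Group (GL (Fin 2) F ⧸ scalarSub F))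

/-- The natural projection `GL₂(F) → PGL₂(F)`, `A ↦ [A]`. -/
def toPGL (F : Type) [Field F] : GL (Fin 2) F →* PGL2 F := QuotientGroup.mk' (scalarSub F)

/-- The polynomial `F_{A,r} = b x^{q^r+1} - a x^{q^r} + d x - c`. -/
def FAr [Fintype F] (A : Matrix (Fin 2) (Fin 2) F) (r : ℕ) : F[X] :=
  C (A 0 1) * X ^ (Fintype.card F ^ r + 1) - C (A 0 0) * X ^ (Fintype.card F ^ r)
    + C (A 1 1) * X - C (A 1 0)


/-- The σ-product of `A = [[a,b],[c,d]]` and `A₀ = [[a₀,b₀],[c₀,d₀]]`. -/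
def sigmaProd (A A0 : Matrix (Fin 2) (Fin 2) F) : Matrix (Fin 2) (Fin 2) F :=
  !![-(A 0 1 * (A0 0 0 * A0 1 0) - A 0 0 * (A0 0 0 * A0 1 1) + A 1 1 * (A0 1 0 * A0 0 1)
        - A 1 0 * (A0 0 1 * A0 1 1)),
     A 0 1 * A0 0 0 ^ 2 - A 0 0 * (A0 0 0 * A0 0 1) + A 1 1 * (A0 0 0 * A0 0 1)
        - A 1 0 * A0 0 1 ^ 2;
     -(A 0 1 * A0 1 0 ^ 2 - A 0 0 * (A0 1 0 * A0 1 1) + A 1 1 * (A0 1 1 * A0 1 0)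
        - A 1 0 * A0 1 1 ^ 2),
     A 0 1 * (A0 0 0 * A0 1 0) - A 0 0 * (A0 1 0 * A0 0 1) + A 1 1 * (A0 1 1 * A0 0 0)
        - A 1 0 * (A0 0 1 * A0 1 1)]

end PGLAct

namespace PGLAct

open Polynomial AdjoinRoot

theorem isCyclic_aut_of_finite (F K : Type) [Field F] [Fintype F] [Field K] [Finite K]
    [Algebra F K] : IsCyclic (K ≃ₐ[F] K) := by
  cases nonempty_fintype K
  obtain ⟨p, hp⟩ := CharP.exists F
  haveI : CharP F p := hp
  haveI hpp : Fact p.Prime := ⟨CharP.char_is_prime F p⟩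
  haveI : CharP K p := charP_of_injective_algebraMap' F (A := K) p
  haveI : ExpChar K p := ExpChar.prime hpp.out
  obtain ⟨d, -, hcard⟩ := FiniteField.card F p
  set q := Fintype.card F with hq
  have hpow : ∀ x : K, (iterateFrobenius K p d) x = x ^ q := by
    intro x; rw [iterateFrobenius_def, hcard]
  have halg : ∀ x : F, (iterateFrobenius K p d) (algebraMap F K x) = algebraMap F K x := by
    intro x; rw [hpow, ← map_pow, FiniteField.pow_card]
  have hbij : Function.Bijective (iterateFrobenius K p d) :=
    Finite.injective_iff_bijective.mp (iterateFrobenius K p d).injective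
  let φ : K ≃ₐ[F] K := { RingEquiv.ofBijective _ hbij with commutes' := halg }
  have hφ : ∀ x : K, φ x = x ^ q := hpow
  have hφpow : ∀ (j : ℕ) (x : K), (φ ^ j) x = x ^ q ^ j := by
    intro j
    induction j with
    | zero => intro x; simp
    | succ j ih =>
      intro x
      rw [pow_succ, AlgEquiv.mul_apply, hφ, ih, ← pow_mul, pow_succ, mul_comm (q ^ j) q, pow_mul]
  set n := Module.finrank F K with hn
  have hcardK : Fintype.card K = q ^ n := Module.card_eq_pow_finrank
  have hq2 : 2 ≤ q := Fintype.one_lt_card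
  have hord : orderOf φ = Nat.card (K ≃ₐ[F] K) := by
    have hcardAut : Nat.card (K ≃ₐ[F] K) = n := by
      rw [IsGalois.card_aut_eq_finrank]
    rw [hcardAut]
    have h1 : orderOf φ ∣ n := by
      rw [← hcardAut]; exact orderOf_dvd_natCard φ
    have h2 : n ≤ orderOf φ := by
      by_contra hlt
      push_neg at hlt
      set m := orderOf φ with hm
      have hone : φ ^ m = 1 := pow_orderOf_eq_one φ
      have hroots : ∀ x : K, x ^ q ^ m = x := by
        intro x
        have := congrArg (fun ψ : K ≃ₐ[F] K => ψ x) hone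
        simpa [hφpow] using this
      have hm1 : (1:ℕ) ≤ m := orderOf_pos φ
      have hqm2 : 1 < q ^ m := by
        calc 1 < q := by omega
        _ = q ^ 1 := (pow_one q).symm
        _ ≤ q ^ m := Nat.pow_le_pow_right (by omega) hm1
      have h1' : (X : K[X]).natDegree < (X ^ q ^ m : K[X]).natDegree := by
        simpa [natDegree_X_pow] using hqm2
      have hdegeq : (X ^ q ^ m - X : K[X]).natDegree = q ^ m := by
        rw [natDegree_sub_eq_left_of_natDegree_lt h1', natDegree_X_pow]
      have hdeg : (X ^ q ^ m - X : K[X]).natDegree < Fintype.card K := by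
        rw [hdegeq, hcardK]
        exact Nat.pow_lt_pow_right hq2 (by omega)
      have hP : (X ^ q ^ m - X : K[X]) = 0 := by
        apply eq_zero_of_natDegree_lt_card_of_eval_eq_zero _ (f := (id : K → K))
          Function.injective_id
        · intro x; simp [hroots x]
        · simpa using hdeg
      rw [hP] at hdegeq
      simp at hdegeq
      omega
    have hn0 : 0 < n := Module.finrank_pos
    exact le_antisymm (Nat.le_of_dvd hn0 h1) h2
  exact isCyclic_of_orderOf_eq_card φ hord

namespace Aux

variable {F : Type} [Field F]
variable (f : F[X]) [Fact (Irreducible f)]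

def num (A : Matrix (Fin 2) (Fin 2) F) (x : AdjoinRoot f) : AdjoinRoot f :=
  algebraMap F _ (A 0 0) * x + algebraMap F _ (A 1 0)

def den (A : Matrix (Fin 2) (Fin 2) F) (x : AdjoinRoot f) : AdjoinRoot f :=
  algebraMap F _ (A 0 1) * x + algebraMap F _ (A 1 1)

def mob (A : Matrix (Fin 2) (Fin 2) F) (x : AdjoinRoot f) : AdjoinRoot f :=
  num f A x * (den f A x)⁻¹

lemma aeval_root_self : aeval (root f) f = 0 := by simp [aeval_eq]

lemma eval_mcirc (A : Matrix (Fin 2) (Fin 2) F) (x : AdjoinRoot f) :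
    aeval x (mcirc A f) = ∑ i ∈ Finset.range (f.natDegree + 1),
      algebraMap F _ (f.coeff i) * (num f A x) ^ i * (den f A x) ^ (f.natDegree - i) := by
  simp [mcirc, num, den, map_sum]

lemma aeval_mcirc_root (A : Matrix (Fin 2) (Fin 2) F) (h : pcirc A f = f) (hm : f.Monic) :
    aeval (root f) (mcirc A f) = 0 := by
  have hf0 : f ≠ 0 := hm.ne_zero
  have hmc : mcirc A f ≠ 0 := by
    intro h0
    rw [pcirc, h0, mul_zero] at h
    exact hf0 h.symm
  have hl : (mcirc A f).leadingCoeff ≠ 0 := leadingCoeff_ne_zero.mpr hmc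
  have := congrArg (aeval (root f)) h
  rw [aeval_root_self, pcirc, map_mul, aeval_C] at this
  have hinv : algebraMap F (AdjoinRoot f) (mcirc A f).leadingCoeff⁻¹ ≠ 0 := by
    simpa using inv_ne_zero hl
  exact (mul_eq_zero.mp this).resolve_left hinv

lemma den_root_ne_zero (A : GL (Fin 2) F) (h : pcirc A.val f = f) (hm : f.Monic) :
    den f A.val (root f) ≠ 0 := by
  intro hden
  have h0 := aeval_mcirc_root f A.val h hm
  rw [eval_mcirc] at h0
  set n := f.natDegree with hn
  have hsum : ∀ i ∈ Finset.range (n + 1), i ≠ n →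
      algebraMap F (AdjoinRoot f) (f.coeff i) * (num f A.val (root f)) ^ i *
        (den f A.val (root f)) ^ (n - i) = 0 := by
    intro i hi hne
    have : 0 < n - i := by
      simp only [Finset.mem_range] at hi; omega
    rw [hden, zero_pow (by omega), mul_zero]
  rw [Finset.sum_eq_single_of_mem n (Finset.self_mem_range_succ n) hsum] at h0
  rw [Nat.sub_self, pow_zero, mul_one, hm.coeff_natDegree, map_one, one_mul] at h0
  have hnum : num f A.val (root f) = 0 := by
    exact (pow_eq_zero_iff'.mp h0).1
  -- derive det = 0
  have hdet : algebraMap F (AdjoinRoot f) (A.val 0 1 * A.val 1 0 - A.val 0 0 * A.val 1 1) = 0 := by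
    have : algebraMap F (AdjoinRoot f) (A.val 0 1) * num f A.val (root f)
        - algebraMap F (AdjoinRoot f) (A.val 0 0) * den f A.val (root f)
        = algebraMap F (AdjoinRoot f) (A.val 0 1 * A.val 1 0 - A.val 0 0 * A.val 1 1) := by
      simp only [num, den, map_sub, map_mul]
      ring
    rw [hnum, hden, mul_zero, mul_zero, sub_zero] at this
    exact this.symm
  have hdet0 : A.val 0 1 * A.val 1 0 - A.val 0 0 * A.val 1 1 = 0 :=
    (algebraMap F (AdjoinRoot f)).injective (by simpa using hdet)
  have hdu : IsUnit (A.val.det) := (Matrix.isUnit_iff_isUnit_det A.val).mp A.isUnit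
  rw [Matrix.det_fin_two] at hdu
  have : A.val 0 0 * A.val 1 1 - A.val 0 1 * A.val 1 0 = 0 := by linear_combination -hdet0
  rw [this] at hdu
  exact (not_isUnit_zero hdu)

lemma aeval_mob_root (A : GL (Fin 2) F) (h : pcirc A.val f = f) (hm : f.Monic) :
    aeval (mob f A.val (root f)) f = 0 := by
  have hden := den_root_ne_zero f A h hm
  set n := f.natDegree with hn
  set u := den f A.val (root f) with hu
  set v := num f A.val (root f) with hv
  have key : u ^ n * aeval (mob f A.val (root f)) f = 0 := by
    rw [aeval_eq_sum_range, Finset.mul_sum]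
    rw [← aeval_mcirc_root f A.val h hm, eval_mcirc]
    apply Finset.sum_congr rfl
    intro i hi
    simp only [Finset.mem_range] at hi
    have hile : i ≤ n := by omega
    rw [Algebra.smul_def, mob, mul_pow, inv_pow, pow_sub₀ u hden hile, ← hu, ← hv]
    ring
  have hu0 : u ^ n ≠ 0 := pow_ne_zero _ hden
  exact (mul_eq_zero.mp key).resolve_left hu0

lemma mob_mul (A B : Matrix (Fin 2) (Fin 2) F) (x : AdjoinRoot f)
    (hA : den f A x ≠ 0) (hAB : den f (A * B) x ≠ 0) :
    mob f B (mob f A x) = mob f (A * B) x := by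
  have hnum : num f B (mob f A x) = num f (A * B) x * (den f A x)⁻¹ := by
    rw [num, num, mob, Matrix.mul_apply, Matrix.mul_apply]
    field_simp
    rw [num, den]
    simp [Fin.sum_univ_two, map_add, map_mul]
    ring
  have hden2 : den f B (mob f A x) = den f (A * B) x * (den f A x)⁻¹ := by
    rw [den, den, mob, Matrix.mul_apply, Matrix.mul_apply]
    field_simp
    rw [num, den]
    simp [Fin.sum_univ_two, map_add, map_mul]
    ring
  rw [mob, hnum, hden2, mul_inv, inv_inv, mob]
  field_simp

variable [Fintype F]

lemma finite_adjoinRoot : Finite (AdjoinRoot f) := by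
  have hf0 : f ≠ 0 := (Fact.out : Irreducible f).ne_zero
  have : Module.Finite F (AdjoinRoot f) := Module.Finite.of_basis (AdjoinRoot.powerBasis hf0).basis
  exact Module.finite_of_finite F

def sig (A : Matrix (Fin 2) (Fin 2) F) : AdjoinRoot f ≃ₐ[F] AdjoinRoot f :=
  if h : aeval (mob f A (root f)) f = 0 then
    AlgEquiv.ofBijective (liftAlgHom f (Algebra.ofId F _) _ h) (by
      haveI : Finite (AdjoinRoot f) := finite_adjoinRoot f
      exact Finite.injective_iff_bijective.mp
        (by rw [← AlgHom.coe_toRingHom]; exact (liftAlgHom f (Algebra.ofId F _) _ h).toRingHom.injective))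
  else 1

lemma sig_root (A : Matrix (Fin 2) (Fin 2) F) (h : aeval (mob f A (root f)) f = 0) :
    sig f A (root f) = mob f A (root f) := by
  rw [sig, dif_pos h]
  exact AdjoinRoot.liftAlgHom_root f (Algebra.ofId F _) (mob f A (root f)) h

lemma algEquiv_ext {σ τ : AdjoinRoot f ≃ₐ[F] AdjoinRoot f} (h : σ (root f) = τ (root f)) :
    σ = τ := by
  have : σ.toAlgHom = τ.toAlgHom := AdjoinRoot.algHom_ext h
  ext x
  exact DFunLike.congr_fun this x

lemma sig_apply_mob (A B : Matrix (Fin 2) (Fin 2) F) (hB : aeval (mob f B (root f)) f = 0)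
    (hA : aeval (mob f A (root f)) f = 0) :
    sig f A (mob f B (root f)) = mob f B (sig f A (root f)) := by
  simp only [mob, num, den, map_mul, map_add, map_inv₀, AlgEquiv.commutes]

lemma mem_scalar_of_fix (A : GL (Fin 2) F) (hm : f.Monic) (hd : 3 ≤ f.natDegree)
    (h : pcirc A.val f = f) (hfix : mob f A.val (root f) = root f) : A ∈ scalarSub F := by
  have hf0 : f ≠ 0 := hm.ne_zero
  have hden := den_root_ne_zero f A h hm
  have hmin : minpoly F (root f) = f := by
    rw [AdjoinRoot.minpoly_root hf0, hm.leadingCoeff, inv_one, map_one, mul_one]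
  have hnum : num f A.val (root f) = root f * den f A.val (root f) := by
    rw [mob] at hfix
    field_simp at hfix
    exact hfix.trans (mul_comm _ _)
  set p : F[X] := C (A.val 0 1) * X ^ 2 + C (A.val 1 1 - A.val 0 0) * X - C (A.val 1 0)
    with hp
  have hev : aeval (root f) p = 0 := by
    have : aeval (root f) p
        = root f * den f A.val (root f) - num f A.val (root f) := by
      simp only [hp, map_sub, map_add, map_mul, map_pow, aeval_C, aeval_X, num, den]
      ring
    rw [this, hnum, sub_self]
  have hp0 : p = 0 := by
    by_contra hpne
    have h1 := minpoly.degree_le_of_ne_zero F (root f) hpne hev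
    rw [hmin] at h1
    have h2 : p.degree ≤ 2 := by
      rw [hp]
      compute_degree
    have h3 : f.natDegree ≤ 2 := natDegree_le_iff_degree_le.mpr (h1.trans h2)
    omega
  have hb : A.val 0 1 = 0 := by
    have := congrArg (fun q : F[X] => q.coeff 2) hp0
    simpa [hp, coeff_C] using this
  have hc : A.val 1 0 = 0 := by
    have := congrArg (fun q : F[X] => q.coeff 0) hp0
    simpa [hp, coeff_C] using this
  have hda : A.val 1 1 = A.val 0 0 := by
    have := congrArg (fun q : F[X] => q.coeff 1) hp0
    simp [hp, coeff_C] at this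
    exact sub_eq_zero.mp this
  have hdu : IsUnit A.val.det := (Matrix.isUnit_iff_isUnit_det A.val).mp A.isUnit
  rw [Matrix.det_fin_two, hb, hc, hda] at hdu
  have ha : A.val 0 0 ≠ 0 := by
    intro h0
    rw [h0] at hdu
    simp at hdu
  refine ⟨Units.mk0 (A.val 0 0) ha, ?_⟩
  apply Units.ext
  show Matrix.scalar (Fin 2) (A.val 0 0) = A.val
  ext i j
  fin_cases i <;> fin_cases j <;>
    simp [Matrix.scalar_apply, Matrix.diagonal_apply, hb, hc, hda]

lemma mob_of_scalar (A : GL (Fin 2) F) (hA : A ∈ scalarSub F) :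
    mob f A.val (root f) = root f := by
  obtain ⟨u, hu⟩ := hA
  have hval : A.val = Matrix.scalar (Fin 2) (u : F) := by
    rw [← hu]; rfl
  have h00 : A.val 0 0 = (u : F) := by rw [hval]; simp
  have h01 : A.val 0 1 = 0 := by rw [hval]; simp [Matrix.scalar_apply]
  have h10 : A.val 1 0 = 0 := by rw [hval]; simp [Matrix.scalar_apply]
  have h11 : A.val 1 1 = (u : F) := by rw [hval]; simp
  have hune : algebraMap F (AdjoinRoot f) (u : F) ≠ 0 := by
    simpa using (map_ne_zero (algebraMap F (AdjoinRoot f))).mpr u.ne_zero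
  rw [mob, num, den, h00, h01, h10, h11, map_zero, zero_mul, zero_add, add_zero,
    mul_comm, ← mul_assoc, inv_mul_cancel₀ hune, one_mul]

end Aux

end PGLAct


/-- If `G ≤ PGL₂(F_q)` is non-cyclic of order at least `5`, then no monic
irreducible polynomial of degree at least `3` is `G`-invariant. -/
theorem no_invariant_noncyclic_ge_five {F : Type} [Field F] [Fintype F]
    (G : Subgroup (PGLAct.PGL2 F)) (hnc : ¬ IsCyclic G) (hcard : 5 ≤ Nat.card G) :
    ∀ f : F[X], f.Monic → Irreducible f → 3 ≤ f.natDegree →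
      ¬ (∀ A : GL (Fin 2) F, PGLAct.toPGL F A ∈ G → PGLAct.pcirc A.val f = f) := by

  classical
  intro f hm hirr hd hinv
  haveI : Fact (Irreducible f) := ⟨hirr⟩
  haveI : Finite (AdjoinRoot f) := PGLAct.Aux.finite_adjoinRoot f
  haveI : IsCyclic (AdjoinRoot f ≃ₐ[F] AdjoinRoot f) :=
    PGLAct.isCyclic_aut_of_finite F (AdjoinRoot f)
  set S : Subgroup (GL (Fin 2) F) := G.comap (PGLAct.toPGL F) with hS
  have hmemS : ∀ A : S, PGLAct.pcirc (A.1).val f = f := fun A => hinv A.1 A.2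
  -- the projection S →* G
  let π : S →* G := ((PGLAct.toPGL F).comp S.subtype).codRestrict G (fun x => x.2)
  have hπ : Function.Surjective π := by
    intro g
    obtain ⟨A, hA⟩ := QuotientGroup.mk'_surjective (PGLAct.scalarSub F) g.1
    have hAm : A ∈ S := by
      show PGLAct.toPGL F A ∈ G
      rw [show PGLAct.toPGL F A = g.1 from hA]
      exact g.2
    exact ⟨⟨A, hAm⟩, Subtype.ext hA⟩
  -- the map to the Galois group
  have hmapmul : ∀ A B : S,
      PGLAct.Aux.sig f ((A * B : S) : GL (Fin 2) F).val
        = PGLAct.Aux.sig f (A.1).val * PGLAct.Aux.sig f (B.1).val := by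
    intro A B
    have hA := hmemS A
    have hB := hmemS B
    have hAB := hmemS (A * B)
    have hABval : ((A * B : S) : GL (Fin 2) F).val = (A.1).val * (B.1).val := rfl
    have rA := PGLAct.Aux.aeval_mob_root f A.1 hA hm
    have rB := PGLAct.Aux.aeval_mob_root f B.1 hB hm
    have rAB := PGLAct.Aux.aeval_mob_root f (A * B).1 hAB hm
    apply PGLAct.Aux.algEquiv_ext f
    rw [AlgEquiv.mul_apply, PGLAct.Aux.sig_root f (B.1).val rB,
      PGLAct.Aux.sig_apply_mob f (A.1).val (B.1).val rB rA,
      PGLAct.Aux.sig_root f (A.1).val rA,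
      PGLAct.Aux.mob_mul f (A.1).val (B.1).val (AdjoinRoot.root f)
        (PGLAct.Aux.den_root_ne_zero f A.1 hA hm)
        (PGLAct.Aux.den_root_ne_zero f (A * B).1 hAB hm),
      hABval, PGLAct.Aux.sig_root f ((A.1).val * (B.1).val) rAB]
  let Ψ : S →* (AdjoinRoot f ≃ₐ[F] AdjoinRoot f) :=
    MonoidHom.mk' (fun A => PGLAct.Aux.sig f (A.1).val) hmapmul
  have hker : π.ker = Ψ.ker := by
    ext A
    have hA := hmemS A
    constructor
    · intro h1
      have h2 : PGLAct.toPGL F A.1 = 1 := congrArg Subtype.val h1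
      have h3 : A.1 ∈ PGLAct.scalarSub F := (QuotientGroup.eq_one_iff _).mp h2
      have hfix := PGLAct.Aux.mob_of_scalar f A.1 h3
      show PGLAct.Aux.sig f (A.1).val = 1
      apply PGLAct.Aux.algEquiv_ext f
      rw [PGLAct.Aux.sig_root f _ (by rw [hfix]; exact PGLAct.Aux.aeval_root_self f), hfix,
        AlgEquiv.one_apply]
    · intro h1
      have h2 : PGLAct.Aux.sig f (A.1).val = 1 := h1
      have rA := PGLAct.Aux.aeval_mob_root f A.1 hA hm
      have hfix : PGLAct.Aux.mob f (A.1).val (AdjoinRoot.root f) = AdjoinRoot.root f := by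
        rw [← PGLAct.Aux.sig_root f _ rA, h2, AlgEquiv.one_apply]
      have h3 := PGLAct.Aux.mem_scalar_of_fix f A.1 hm hd hA hfix
      have h4 : PGLAct.toPGL F A.1 = 1 := (QuotientGroup.eq_one_iff _).mpr h3
      exact Subtype.ext h4
  have e1 := QuotientGroup.quotientKerEquivOfSurjective π hπ
  have e2 := QuotientGroup.quotientMulEquivOfEq hker
  have hinj : Function.Injective
      ((QuotientGroup.kerLift Ψ).comp (e2.toMonoidHom.comp e1.symm.toMonoidHom)) := by
    have := QuotientGroup.kerLift_injective Ψ
    simp only [MonoidHom.coe_comp, MulEquiv.coe_toMonoidHom]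
    exact this.comp (e2.injective.comp e1.symm.injective)
  haveI : IsCyclic (((QuotientGroup.kerLift Ψ).comp
      (e2.toMonoidHom.comp e1.symm.toMonoidHom)).range) := Subgroup.isCyclic _
  have : IsCyclic G :=
    isCyclic_of_surjective _ (MonoidHom.ofInjective hinj).symm.surjective
  exact hnc this
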